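/- MacMahon's boxed plane partition formula: for all natural numbers a, b, c, the number of plane partitions in the a×b×c box — i.e., functions π : {1,…,a}×{1,…,b} → {0,1,…,c} that are weakly decreasing in each coordinate — equals ∏_{i=1}^a ∏_{j=1}^b ∏_{k=1}^c (i+j+k−1)/(i+j+k−2). -/

import Mathlib

namespace MacMahon

open Finset Matrix Polynomial




/-- `h_m(1^n)` : number of weakly increasing sequences, extended by 0 to negative `m`.
For `m ≥ 0` this is `choose (m + n - 1) m`. -/
def hh (n : ℕ) (m : ℤ) : ℚ :=
  if m < 0 then 0 else ((m.toNat + n - 1).choose m.toNat : ℚ)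

lemma hh_neg {n : ℕ} {m : ℤ} (h : m < 0) : hh n m = 0 := by simp [hh, h]

lemma hh_nonneg {n : ℕ} {m : ℤ} (h : 0 ≤ m) :
    hh n m = ((m.toNat + n - 1).choose m.toNat : ℚ) := by simp [hh, not_lt.2 h]

lemma hh_zero (n : ℕ) : hh n 0 = 1 := by simp [hh]

lemma hh_pascal (n : ℕ) (m : ℤ) : hh (n + 1) m = hh (n + 1) (m - 1) + hh n m := by
  rcases lt_trichotomy m 0 with h | h | h
  · rw [hh_neg h, hh_neg (by omega), hh_neg h]; ring
  · subst h
    rw [hh_zero, hh_neg (by norm_num), hh_zero]; ring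
  · have h1 : (0:ℤ) ≤ m - 1 := by omega
    rw [hh_nonneg h.le, hh_nonneg h1, hh_nonneg h.le]
    have hm : m.toNat = (m - 1).toNat + 1 := by omega
    rw [hm]
    have : (m - 1).toNat + 1 + (n + 1) - 1 = ((m-1).toNat + n) + 1 := by omega
    rw [this]
    have h2 : (m - 1).toNat + 1 + n - 1 = (m-1).toNat + n := by omega
    have h3 : (m - 1).toNat + (n + 1) - 1 = (m-1).toNat + n := by omega
    rw [h2, h3, Nat.choose_succ_succ']
    push_cast
    ring

/-- hockey stick / telescoping sum -/
lemma hh_sum (n : ℕ) (s : ℤ) (lo hi : ℕ) (h : lo ≤ hi) :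
    ∑ m ∈ Finset.Icc lo hi, hh n ((m : ℤ) + s)
      = hh (n + 1) ((hi : ℤ) + s) - hh (n + 1) ((lo : ℤ) - 1 + s) := by
  induction hi, h using Nat.le_induction with
  | base =>
      rw [Finset.Icc_self, Finset.sum_singleton]
      have := hh_pascal n ((lo : ℤ) + s)
      have e : (lo : ℤ) + s - 1 = (lo : ℤ) - 1 + s := by ring
      rw [e] at this
      linarith
  | succ k hk ih =>
      rw [Finset.sum_Icc_succ_top (by omega), ih]
      have := hh_pascal n ((k : ℤ) + 1 + s)
      have e : (k : ℤ) + 1 + s - 1 = (k : ℤ) + s := by ring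
      rw [e] at this
      push_cast
      push_cast at this
      linarith


lemma prod_cast_asc (M k : ℕ) :
    (∏ t ∈ Finset.range k, ((M : ℚ) + t + 1)) = ((M + 1).ascFactorial k : ℚ) := by
  induction k with
  | zero => simp
  | succ k ih =>
      rw [Finset.prod_range_succ, ih, Nat.ascFactorial_succ]
      push_cast
      ring

lemma prod_range_fact (k : ℕ) : (∏ t ∈ Finset.range k, ((t : ℚ) + 1)) = (Nat.factorial k : ℚ) := by
  induction k with
  | zero => simp
  | succ k ih => rw [Finset.prod_range_succ, ih, Nat.factorial_succ]; push_cast; ring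

lemma hh_eq_poly (n : ℕ) (hn : 1 ≤ n) (m : ℤ) (h : -(n : ℤ) + 1 ≤ m) :
    hh n m = (∏ t ∈ Finset.range (n - 1), ((m : ℚ) + t + 1)) / (Nat.factorial (n-1) : ℚ) := by
  rcases le_or_gt 0 m with hm | hm
  · rw [hh_nonneg hm]
    have hM : (m : ℤ) = (m.toNat : ℤ) := by omega
    set M := m.toNat with hMdef
    have : (∏ t ∈ Finset.range (n - 1), ((m : ℚ) + t + 1))
        = ∏ t ∈ Finset.range (n - 1), ((M : ℚ) + t + 1) := by
      apply Finset.prod_congr rfl; intro t _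
      rw [show ((m:ℚ)) = (M:ℚ) by exact_mod_cast congrArg (Int.cast : ℤ → ℚ) hM]
    rw [this, prod_cast_asc, Nat.ascFactorial_eq_factorial_mul_choose]
    have hsymm : (M + (n - 1)).choose (n - 1) = (M + (n-1)).choose M := by
      have h5 := Nat.choose_symm (n := M + (n - 1)) (k := n - 1) (by omega : n - 1 ≤ M + (n-1))
      rw [show M + (n-1) - (n-1) = M by omega] at h5
      exact h5.symm
    have harg : M + (n - 1) = M + n - 1 := by omega
    rw [hsymm, harg]
    push_cast
    field_simp
  · rw [hh_neg hm]
    have hz : ((-m - 1).toNat) ∈ Finset.range (n - 1) := by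
      simp only [Finset.mem_range]; omega
    rw [Finset.prod_eq_zero hz]
    · simp
    · have : ((((-m - 1).toNat : ℕ) : ℚ)) = ((-m - 1 : ℤ) : ℚ) := by
        exact_mod_cast congrArg (Int.cast : ℤ → ℚ) (by omega : (((-m-1).toNat : ℤ)) = -m-1)
      rw [this]; push_cast; ring

/-- the key matrix -/
def MM (n : ℕ) {r : ℕ} (l : Fin r → ℕ) : Matrix (Fin r) (Fin r) ℚ :=
  Matrix.of fun i j => hh n ((l i : ℤ) - (i : ℕ) + (j : ℕ))

lemma det_MM (n : ℕ) (l : Fin n → ℕ) :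
    (MM n l).det = ∏ i : Fin n, ∏ j ∈ Finset.Ioi i,
      ((((l i : ℚ) - i) - ((l j : ℚ) - j)) / ((j : ℚ) - i)) := by
  rcases Nat.eq_zero_or_pos n with hn | hn
  · subst hn
    rw [Matrix.det_fin_zero]
    simp
  -- setup
  set p : Fin n → Polynomial ℚ := fun j => ∏ t ∈ Finset.range (n - 1), (X + C ((j : ℚ) + t + 1))
    with hp
  have hdeg : ∀ j, (p j).natDegree < n := by
    intro j
    have : (p j).natDegree ≤ ∑ t ∈ Finset.range (n-1), (X + C ((j : ℚ) + t + 1)).natDegree :=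
      Polynomial.natDegree_prod_le _ _
    simp only [Polynomial.natDegree_X_add_C, Finset.sum_const, Finset.card_range,
      smul_eq_mul, mul_one] at this
    omega
  have heval : ∀ (v : ℚ) (j : Fin n),
      (p j).eval v = ∏ t ∈ Finset.range (n - 1), (v + j + t + 1) := by
    intro v j
    rw [hp]
    simp only [Polynomial.eval_prod, Polynomial.eval_add, Polynomial.eval_X, Polynomial.eval_C]
    apply Finset.prod_congr rfl; intro t _; ring
  set Cf : Matrix (Fin n) (Fin n) ℚ := Matrix.of fun k j => (p j).coeff k with hCf
  -- factorization
  have hfact : ∀ v : Fin n → ℚ,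
      (Matrix.of fun i j => (p j).eval (v i)) = Matrix.vandermonde v * Cf := by
    intro v
    ext i j
    rw [Matrix.mul_apply]
    simp only [Matrix.vandermonde, hCf, Matrix.of_apply]
    rw [Polynomial.eval_eq_sum_range' (hdeg j), Fin.sum_univ_eq_sum_range
      (fun k => v i ^ k * (p j).coeff k)]
    apply Finset.sum_congr rfl; intro k _; ring
  have hdetG : ∀ v : Fin n → ℚ,
      (Matrix.of fun i j => (p j).eval (v i)).det = (∏ i : Fin n, ∏ j ∈ Finset.Ioi i, (v j - v i)) * Cf.det := by
    intro v
    rw [hfact v, Matrix.det_mul, Matrix.det_vandermonde]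
  -- special evaluation point
  set y : Fin n → ℚ := fun i => -(i : ℚ) with hy
  have htri : (Matrix.of fun i j => (p j).eval (y i)).BlockTriangular id := by
    intro i j hij
    simp only [id_eq] at hij
    have hji : (j : ℕ) < (i : ℕ) := hij
    have hmem : ((i : ℕ) - (j : ℕ) - 1) ∈ Finset.range (n - 1) := by
      simp only [Finset.mem_range]
      have := i.isLt
      omega
    rw [Matrix.of_apply, heval]
    apply Finset.prod_eq_zero hmem
    have : (((i:ℕ) - (j:ℕ) - 1 : ℕ) : ℚ) = (i : ℚ) - j - 1 := by
      have h1 : ((((i:ℕ) - (j:ℕ) - 1 : ℕ)) : ℤ) = (i:ℕ) - (j:ℕ) - 1 := by omega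
      exact_mod_cast congrArg (Int.cast : ℤ → ℚ) h1
    rw [this, hy]
    ring
  have hdiag : ∀ i : Fin n, (p i).eval (y i) = (Nat.factorial (n-1) : ℚ) := by
    intro i
    rw [heval, hy]
    rw [← prod_range_fact (n-1)]
    apply Finset.prod_congr rfl; intro t _; ring
  have hCfdet : Cf.det = (Nat.factorial (n-1) : ℚ)^n / ∏ i : Fin n, ∏ j ∈ Finset.Ioi i, ((y j) - (y i)) := by
    have h1 : (Matrix.of fun i j => (p j).eval (y i)).det = ∏ i : Fin n, (p i).eval (y i) :=
      Matrix.det_of_upperTriangular htri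
    have h2 : (∏ i : Fin n, (p i).eval (y i)) = (Nat.factorial (n-1) : ℚ)^n := by
      rw [Finset.prod_congr rfl (fun i _ => hdiag i)]
      simp [Finset.prod_const, Finset.card_univ]
    have h3 := hdetG y
    have hne : (∏ i : Fin n, ∏ j ∈ Finset.Ioi i, ((y j) - (y i))) ≠ 0 := by
      apply Finset.prod_ne_zero_iff.2
      intro i _
      apply Finset.prod_ne_zero_iff.2
      intro j hj
      have hij : i < j := Finset.mem_Ioi.1 hj
      have : (i : ℚ) ≠ (j : ℚ) := by
        have : (i:ℕ) ≠ (j:ℕ) := Nat.ne_of_lt hij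
        exact_mod_cast fun hc => this (by exact_mod_cast hc)
      simp only [hy]
      intro hc
      apply this
      linarith
    field_simp at h3 ⊢
    rw [h1, h2] at h3
    linarith [h3]
  -- main matrix in terms of p
  have hMMeq : MM n l = Matrix.of fun i j => (p j).eval ((l i : ℚ) - i) / (Nat.factorial (n-1) : ℚ) := by
    ext i j
    rw [MM, Matrix.of_apply, Matrix.of_apply, heval]
    have hm : -(n : ℤ) + 1 ≤ (l i : ℤ) - (i:ℕ) + (j:ℕ) := by
      have := i.isLt; have := j.isLt; omega
    rw [hh_eq_poly n hn _ hm]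
    congr 1
    apply Finset.prod_congr rfl; intro t _
    push_cast
    ring
  have hsmul : MM n l = ((Nat.factorial (n-1) : ℚ))⁻¹ • (Matrix.of fun i j => (p j).eval ((l i : ℚ) - i)) := by
    rw [hMMeq]
    ext i j
    simp [Matrix.smul_apply, div_eq_inv_mul]
  rw [hsmul, Matrix.det_smul, hdetG (fun i => (l i : ℚ) - i), hCfdet]
  have hfne : (Nat.factorial (n-1) : ℚ) ≠ 0 := by exact_mod_cast Nat.factorial_ne_zero _
  have hyne : (∏ i : Fin n, ∏ j ∈ Finset.Ioi i, ((y j) - (y i))) ≠ 0 := by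
    apply Finset.prod_ne_zero_iff.2
    intro i _
    apply Finset.prod_ne_zero_iff.2
    intro j hj
    have hij : i < j := Finset.mem_Ioi.1 hj
    have : (i : ℚ) ≠ (j : ℚ) := by
      have h4 : (i:ℕ) ≠ (j:ℕ) := Nat.ne_of_lt hij
      exact_mod_cast fun hc => h4 (by exact_mod_cast hc)
    simp only [hy]
    intro hc
    apply this
    linarith
  rw [Fintype.card_fin]
  have key : ∀ i j : Fin n, (((l j : ℚ) - j) - ((l i : ℚ) - i)) / ((y j) - (y i))
      = (((l i : ℚ) - i) - ((l j : ℚ) - j)) / ((j : ℚ) - i) := by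
    intro i j
    have h6 : y j - y i = -(((j:ℚ)) - (i:ℚ)) := by simp only [hy]; ring
    have h7 : (((l j : ℚ) - j) - ((l i : ℚ) - i)) = -((((l i : ℚ) - i) - ((l j : ℚ) - j))) := by ring
    rw [h6, h7, neg_div_neg_eq]
  have hprodkey : (∏ i : Fin n, ∏ j ∈ Finset.Ioi i, (((l j : ℚ) - j) - ((l i : ℚ) - i)))
      / (∏ i : Fin n, ∏ j ∈ Finset.Ioi i, ((y j) - (y i)))
      = ∏ i : Fin n, ∏ j ∈ Finset.Ioi i,
        ((((l i : ℚ) - i) - ((l j : ℚ) - j)) / ((j : ℚ) - i)) := by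
    rw [← Finset.prod_div_distrib]
    apply Finset.prod_congr rfl; intro i _
    rw [← Finset.prod_div_distrib]
    exact Finset.prod_congr rfl (fun j _ => key i j)
  rw [← hprodkey]
  have hfpow : ((Nat.factorial (n-1) : ℚ))^n ≠ 0 := pow_ne_zero _ hfne
  field_simp
  rw [one_div, inv_pow, mul_right_comm, inv_mul_cancel₀ hfpow, one_mul]

def ex {r : ℕ} (l : Fin r → ℕ) (i : ℕ) : ℕ := if h : i < r then l ⟨i, h⟩ else 0

lemma ex_coe {r : ℕ} (l : Fin r → ℕ) (i : Fin r) : ex l (i : ℕ) = l i := by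
  simp [ex, i.isLt]

lemma ex_ge {r : ℕ} (l : Fin r → ℕ) {i : ℕ} (h : r ≤ i) : ex l i = 0 := by
  simp [ex, Nat.not_lt.2 h]

lemma step_det (n r : ℕ) (l : Fin r → ℕ) (hl : ∀ i : ℕ, ex l (i + 1) ≤ ex l i) :
    ∑ μ ∈ Fintype.piFinset (fun i : Fin r => Finset.Icc (ex l ((i : ℕ) + 1)) (l i)),
      (MM n μ).det = (MM (n + 1) l).det := by
  classical
  -- row functions
  set G : Fin r → ℕ → (Fin r → ℚ) := fun i m => fun j => hh n ((m : ℤ) - (i : ℕ) + (j : ℕ))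
    with hG
  set A : Fin r → Finset ℕ := fun i => Finset.Icc (ex l ((i : ℕ) + 1)) (l i) with hA
  have h1 : ∀ μ : Fin r → ℕ, (MM n μ).det
      = (Matrix.detRowAlternating : (Fin r → ℚ) [⋀^Fin r]→ₗ[ℚ] ℚ).toMultilinearMap
          (fun i => G i (μ i)) := by
    intro μ; rfl
  rw [Finset.sum_congr rfl (fun μ _ => h1 μ)]
  rw [← ((Matrix.detRowAlternating : (Fin r → ℚ) [⋀^Fin r]→ₗ[ℚ] ℚ)).toMultilinearMap.map_sum_finset G A]
  -- now identify `fun i => ∑ m ∈ A i, G i m` with matrix D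
  set D : Matrix (Fin r) (Fin r) ℚ := Matrix.of fun i j =>
    hh (n+1) ((l i : ℤ) - (i : ℕ) + (j : ℕ))
      - hh (n+1) ((ex l ((i : ℕ) + 1) : ℤ) - ((i : ℕ) + 1) + (j : ℕ)) with hD
  have h2 : (fun i => ∑ m ∈ A i, G i m) = fun i => D i := by
    funext i
    funext j
    have : (∑ m ∈ A i, G i m) j = ∑ m ∈ A i, hh n ((m : ℤ) + ((j : ℕ) - (i : ℕ) : ℤ)) := by
      rw [Finset.sum_apply]
      apply Finset.sum_congr rfl; intro m _
      rw [hG]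
      congr 1
      ring
    rw [this, hA]
    have hlohi : ex l ((i : ℕ) + 1) ≤ l i := by
      have := hl (i : ℕ)
      rwa [ex_coe] at this
    rw [hh_sum n _ _ _ hlohi, hD]
    simp only [Matrix.of_apply]
    congr 1
    · congr 1; ring
    · congr 1; ring
  rw [h2]
  -- triangular transformation
  set T : Matrix (Fin r) (Fin r) ℚ := Matrix.of fun i k => if i ≤ k then 1 else 0 with hT
  have hTdet : T.det = 1 := by
    have htri : T.BlockTriangular id := by
      intro i k h
      simp only [id_eq] at h
      simp [hT, not_le.2 h]
    rw [Matrix.det_of_upperTriangular htri]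
    simp [hT]
  have hTD : T * D = MM (n+1) l := by
    ext i j
    rw [Matrix.mul_apply]
    set F : ℕ → ℚ := fun t => hh (n+1) ((ex l t : ℤ) - t + (j : ℕ)) with hF
    have hDF : ∀ k : Fin r, D k j = F (k : ℕ) - F ((k : ℕ) + 1) := by
      intro k
      simp only [hD, Matrix.of_apply, hF, ex_coe]
      have e2 : ((((k:ℕ) + 1 : ℕ)) : ℤ) = ((k:ℕ) : ℤ) + 1 := by push_cast; ring
      rw [e2]
    have : ∑ k, T i k * D k j = ∑ k ∈ Finset.univ.filter (fun k => i ≤ k), D k j := by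
      rw [Finset.sum_filter]
      apply Finset.sum_congr rfl; intro k _
      by_cases h : i ≤ k <;> simp [hT, h]
    rw [this]
    have hbij : ∑ k ∈ Finset.univ.filter (fun k => i ≤ k), D k j
        = ∑ t ∈ Finset.Ico (i : ℕ) r, (F t - F (t + 1)) := by
      have hr : 0 < r := i.pos
      apply Finset.sum_nbij' (fun k : Fin r => (k : ℕ))
        (fun t : ℕ => (⟨t % r, Nat.mod_lt _ hr⟩ : Fin r))
      · intro k hk
        simp only [Finset.mem_filter, Finset.mem_univ, true_and] at hk
        simp only [Finset.mem_Ico]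
        exact ⟨hk, k.isLt⟩
      · intro t ht
        simp only [Finset.mem_Ico] at ht
        simp only [Finset.mem_filter, Finset.mem_univ, true_and]
        have : t % r = t := Nat.mod_eq_of_lt ht.2
        simp only [Fin.le_def, this]
        exact ht.1
      · intro k hk
        simp [Fin.ext_iff, Nat.mod_eq_of_lt k.isLt]
      · intro t ht
        simp only [Finset.mem_Ico] at ht
        simp [Nat.mod_eq_of_lt ht.2]
      · intro k hk
        rw [hDF k]
    rw [hbij]
    have htel : ∑ t ∈ Finset.Ico (i : ℕ) r, (F t - F (t + 1)) = F (i : ℕ) - F r := by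
      rw [Finset.sum_Ico_eq_sum_range]
      have := Finset.sum_range_sub' (fun t => F ((i : ℕ) + t)) (r - (i : ℕ))
      rw [Finset.sum_congr rfl (fun t _ => by rw [show (i:ℕ) + t + 1 = (i:ℕ) + (t+1) by omega])]
      rw [this, show (i:ℕ) + (r - (i:ℕ)) = r by omega]
      norm_num
    rw [htel]
    have hFr : F r = 0 := by
      simp only [hF]
      rw [ex_ge l (le_refl r)]
      apply hh_neg
      have := j.isLt
      push_cast
      omega
    rw [hFr]
    simp only [hF, ex_coe]
    simp [MM]
  calc ((Matrix.detRowAlternating : (Fin r → ℚ) [⋀^Fin r]→ₗ[ℚ] ℚ)).toMultilinearMap (fun i => D i)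
      = D.det := rfl
    _ = T.det * D.det := by rw [hTdet]; ring
    _ = (T * D).det := (Matrix.det_mul T D).symm
    _ = (MM (n+1) l).det := by rw [hTD]


lemma ex_le_ex {r : ℕ} {f f' : Fin r → ℕ} (h : ∀ i, f i ≤ f' i) (t : ℕ) :
    ex f t ≤ ex f' t := by
  unfold ex
  split
  · exact h _
  · exact le_refl _

/-- A padded Gelfand–Tsetlin-style pattern with `n` steps, width `r`, top row `l`. -/
def IsPat (n r : ℕ) (l : Fin r → ℕ) (g : ℕ → Fin r → ℕ) : Prop :=
  (∀ i, g 0 i = 0) ∧ (∀ m, n ≤ m → g m = l) ∧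
  (∀ m i, g m i ≤ g (m+1) i) ∧
  (∀ m i, ex (g (m+1)) (i+1) ≤ ex (g m) i)

def Pat (n r : ℕ) (l : Fin r → ℕ) : Type := {g : ℕ → Fin r → ℕ // IsPat n r l g}

namespace Pat

variable {n r : ℕ} {l : Fin r → ℕ}

lemma mono (g : Pat n r l) : ∀ {m m' : ℕ}, m ≤ m' → ∀ i, g.1 m i ≤ g.1 m' i := by
  intro m m' h i
  induction m', h using Nat.le_induction with
  | base => exact le_refl _
  | succ k hk ih => exact le_trans ih (g.2.2.2.1 k i)

lemma le_top (g : Pat n r l) (m : ℕ) (i : Fin r) : g.1 m i ≤ l i := by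
  rcases le_or_gt m n with h | h
  · have := g.mono h i
    rwa [g.2.2.1 n (le_refl n)] at this
  · rw [g.2.2.1 m h.le]

lemma diag (g : Pat n r l) (s : ℕ) : ∀ (m i : ℕ), ex (g.1 (m + s)) (i + s) ≤ ex (g.1 m) i := by
  induction s with
  | zero => intro m i; simp
  | succ s ih =>
      intro m i
      have h1 := g.2.2.2.2 (m + s) (i + s)
      have e1 : m + (s+1) = (m + s) + 1 := by omega
      have e2 : i + (s+1) = (i + s) + 1 := by omega
      rw [e1, e2]
      exact le_trans h1 (ih m i)

lemma zero_of_le (g : Pat n r l) (m : ℕ) (i : Fin r) (h : m ≤ (i : ℕ)) : g.1 m i = 0 := by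
  have h1 := g.diag m 0 ((i : ℕ) - m)
  rw [Nat.zero_add, show (i:ℕ) - m + m = (i:ℕ) by omega, ex_coe] at h1
  have h2 : ex (g.1 0) ((i:ℕ) - m) = 0 := by
    rcases lt_or_ge ((i:ℕ) - m) r with hc | hc
    · simp only [ex, dif_pos hc]; exact g.2.1 _
    · exact ex_ge _ hc
  omega

instance : Finite (Pat n r l) := by
  let f : Pat n r l → (Fin n → (∀ i : Fin r, Fin (l i + 1))) := fun g =>
    fun m i => ⟨g.1 m i, Nat.lt_succ_of_le (g.le_top m i)⟩
  apply Finite.of_injective f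
  intro g g' h
  apply Subtype.ext
  funext m i
  rcases lt_or_ge m n with hm | hm
  · have := congrFun (congrFun h ⟨m, hm⟩) i
    simpa [f, Fin.ext_iff] using this
  · rw [g.2.2.1 m hm, g'.2.2.1 m hm]

end Pat

/-- fiber equivalence for the recursion -/
def fiberEquiv (n r : ℕ) (l : Fin r → ℕ) (hl : ∀ i : ℕ, ex l (i + 1) ≤ ex l i)
    (μ : Fin r → ℕ)
    (hbox : ∀ i : Fin r, ex l ((i : ℕ) + 1) ≤ μ i ∧ μ i ≤ l i) :
    {g : Pat (n+1) r l // g.1 n = μ} ≃ Pat n r μ where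
  toFun gp := ⟨fun m => gp.1.1 (min m n), by
    constructor
    · intro i
      beta_reduce
      rw [min_eq_left (Nat.zero_le n)]
      exact gp.1.2.1 i
    refine ⟨?_, ?_, ?_⟩
    · intro m hm
      beta_reduce
      rw [min_eq_right hm, gp.2]
    · intro m i
      beta_reduce
      exact gp.1.mono (min_le_min_right n (Nat.le_succ m)) i
    · intro m i
      beta_reduce
      rcases le_or_gt (m+1) n with h1 | h1
      · rw [min_eq_left h1, min_eq_left (by omega)]
        exact gp.1.2.2.2.2 m i
      · rw [min_eq_right (by omega), min_eq_right (by omega)]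
        calc ex (gp.1.1 n) (i+1) ≤ ex (gp.1.1 (n+1)) (i+1) :=
              ex_le_ex (fun k => gp.1.2.2.2.1 n k) (i+1)
          _ ≤ ex (gp.1.1 n) i := gp.1.2.2.2.2 n i⟩
  invFun p := ⟨⟨fun m => if m ≤ n then p.1 m else l, by
    constructor
    · intro i
      beta_reduce
      rw [if_pos (Nat.zero_le n)]
      exact p.2.1 i
    refine ⟨?_, ?_, ?_⟩
    · intro m hm
      beta_reduce
      rw [if_neg (by omega)]
    · intro m i
      beta_reduce
      rcases le_or_gt (m+1) n with h1 | h1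
      · rw [if_pos h1, if_pos (show m ≤ n by omega)]
        exact p.mono (by omega) i
      · rcases le_or_gt m n with h2 | h2
        · have hmn : m = n := by omega
          subst hmn
          rw [if_pos (le_refl _), if_neg (by omega), p.2.2.1 m (le_refl _)]
          exact (hbox i).2
        · rw [if_neg (by omega), if_neg (by omega)]
    · intro m i
      beta_reduce
      rcases le_or_gt (m+1) n with h1 | h1
      · rw [if_pos h1, if_pos (show m ≤ n by omega)]
        exact p.2.2.2.2 m i
      · rcases le_or_gt m n with h2 | h2
        · have hmn : m = n := by omega
          subst hmn
          rw [if_neg (by omega), if_pos (le_refl _), p.2.2.1 m (le_refl _)]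
          rcases lt_or_ge i r with hir | hir
          · rw [show ex μ i = μ ⟨i, hir⟩ from by simp [ex, hir]]
            exact (hbox ⟨i, hir⟩).1
          · rw [ex_ge l (by omega : r ≤ i + 1)]
            exact Nat.zero_le _
        · rw [if_neg (by omega), if_neg (by omega)]
          exact hl i⟩,
    by show (if n ≤ n then p.1 n else l) = μ
       rw [if_pos (le_refl n), p.2.2.1 n (le_refl _)]⟩
  left_inv gp := by
    apply Subtype.ext
    apply Subtype.ext
    funext m i
    show (if m ≤ n then gp.1.1 (min m n) else l) i = gp.1.1 m i
    rcases le_or_gt m n with h1 | h1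
    · rw [if_pos h1, min_eq_left h1]
    · rw [if_neg (by omega), gp.1.2.2.1 m (by omega)]
  right_inv p := by
    apply Subtype.ext
    funext m i
    show (if (min m n) ≤ n then p.1 (min m n) else l) i = p.1 m i
    rw [if_pos (min_le_right m n)]
    rcases le_or_gt m n with h1 | h1
    · rw [min_eq_left h1]
    · rw [min_eq_right (by omega), p.2.2.1 n (le_refl _), p.2.2.1 m (by omega)]

lemma pat_mono {n r : ℕ} {l : Fin r → ℕ} (g : Pat n r l) {m m' : ℕ} (h : m ≤ m') (i : Fin r) :
    g.1 m i ≤ g.1 m' i := g.mono h i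
lemma pat_le_top {n r : ℕ} {l : Fin r → ℕ} (g : Pat n r l) (m : ℕ) (i : Fin r) :
    g.1 m i ≤ l i := g.le_top m i
lemma pat_diag {n r : ℕ} {l : Fin r → ℕ} (g : Pat n r l) (s m i : ℕ) :
    ex (g.1 (m + s)) (i + s) ≤ ex (g.1 m) i := g.diag s m i
lemma pat_zero_of_le {n r : ℕ} {l : Fin r → ℕ} (g : Pat n r l) (m : ℕ) (i : Fin r)
    (h : m ≤ (i : ℕ)) : g.1 m i = 0 := g.zero_of_le m i h
lemma hh_zero_ne {m : ℤ} (h : m ≠ 0) : hh 0 m = 0 := by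
  rcases lt_or_ge m 0 with h1 | h1
  · exact hh_neg h1
  · have h2 : 0 < m := lt_of_le_of_ne h1 (Ne.symm h)
    rw [hh, if_neg (by omega)]
    have : m.toNat + 0 - 1 < m.toNat := by omega
    rw [Nat.choose_eq_zero_of_lt this]
    norm_num

theorem pat_card (r : ℕ) : ∀ (n : ℕ) (l : Fin r → ℕ),
    (∀ i : ℕ, ex l (i + 1) ≤ ex l i) →
    (Nat.card (Pat n r l) : ℚ) = (MM n l).det := by
  intro n
  induction n with
  | zero =>
      intro l hl
      by_cases hl0 : ∀ i, l i = 0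
      · -- card 1, identity matrix
        have hcard : Nat.card (Pat 0 r l) = 1 := by
          rw [Nat.card_eq_one_iff_unique]
          constructor
          · constructor
            intro g g'
            apply Subtype.ext
            funext m i
            rw [g.2.2.1 m (Nat.zero_le m), g'.2.2.1 m (Nat.zero_le m)]
          · exact ⟨⟨fun _ => l, fun i => hl0 i, fun m _ => rfl, fun m i => le_refl _,
              fun m i => hl i⟩⟩
        rw [hcard]
        have hMM : MM 0 l = 1 := by
          ext i j
          rw [MM, Matrix.of_apply, Matrix.one_apply]
          rw [hl0 i]
          by_cases hij : i = j
          · subst hij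
            simp [hh_zero]
          · rw [if_neg hij]
            apply hh_zero_ne
            have : (i : ℕ) ≠ (j : ℕ) := fun hc => hij (Fin.ext hc)
            omega
        rw [hMM, Matrix.det_one]
        norm_num
      · push_neg at hl0
        obtain ⟨i0, hi0⟩ := hl0
        have hempty : IsEmpty (Pat 0 r l) := by
          constructor
          intro g
          apply hi0
          rw [← g.2.2.1 0 (le_refl 0)]
          exact g.2.1 i0
        have hcard : Nat.card (Pat 0 r l) = 0 := by
          simp [Nat.card_eq_zero]
        rw [hcard]
        have hdet : (MM 0 l).det = 0 := by
          rw [Matrix.det_apply]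
          apply Finset.sum_eq_zero
          intro σ _
          have hzero : ∃ i, MM 0 l (σ i) i = 0 := by
            by_contra hc
            push_neg at hc
            have hval : ∀ i, (l (σ i) : ℤ) = (σ i : ℕ) - (i : ℕ) := by
              intro i
              have := hc i
              rw [MM, Matrix.of_apply] at this
              by_contra hne
              exact this (hh_zero_ne (by omega))
            have hsum : ∑ i : Fin r, ((l (σ i) : ℤ)) = 0 := by
              have h1 : ∑ i : Fin r, ((σ i : ℕ) : ℤ) = ∑ i : Fin r, ((i : ℕ) : ℤ) :=
                Equiv.sum_comp σ (fun i => ((i : ℕ) : ℤ))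
              calc ∑ i : Fin r, ((l (σ i) : ℤ))
                  = ∑ i : Fin r, (((σ i : ℕ) : ℤ) - ((i : ℕ) : ℤ)) :=
                    Finset.sum_congr rfl (fun i _ => hval i)
                _ = 0 := by rw [Finset.sum_sub_distrib, h1]; ring
            have hall : ∀ i ∈ Finset.univ, (l (σ i) : ℤ) = 0 :=
              (Finset.sum_eq_zero_iff_of_nonneg (fun i _ => by positivity)).1 hsum
            have := hall (σ.symm i0) (Finset.mem_univ _)
            rw [Equiv.apply_symm_apply] at this
            exact hi0 (by exact_mod_cast this)
          obtain ⟨i, hi⟩ := hzero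
          have hp : (∏ j : Fin r, MM 0 l (σ j) j) = 0 :=
            Finset.prod_eq_zero (Finset.mem_univ i) hi
          rw [hp, smul_zero]
        rw [hdet]
        norm_num
  | succ n ih =>
      intro l hl
      classical
      have : Fintype (Pat (n+1) r l) := Fintype.ofFinite _
      set A : Fin r → Finset ℕ := fun i => Finset.Icc (ex l ((i : ℕ) + 1)) (l i) with hA
      have hbox : ∀ g : Pat (n+1) r l, ∀ i : Fin r,
          ex l ((i : ℕ) + 1) ≤ g.1 n i ∧ g.1 n i ≤ l i := by
        intro g i
        constructor
        · have h1 := g.2.2.2.2 n (i : ℕ)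
          rw [g.2.2.1 (n+1) (le_refl _), ex_coe] at h1
          exact h1
        · exact pat_le_top g n i
      have hmaps : ∀ g : Pat (n+1) r l, g.1 n ∈ Fintype.piFinset A := by
        intro g
        rw [Fintype.mem_piFinset]
        intro i
        rw [hA, Finset.mem_Icc]
        exact hbox g i
      have hcard : Nat.card (Pat (n+1) r l)
          = ∑ μ ∈ Fintype.piFinset A, Nat.card {g : Pat (n+1) r l // g.1 n = μ} := by
        rw [Nat.card_eq_fintype_card]
        rw [Finset.card_univ.symm]
        rw [Finset.card_eq_sum_card_fiberwise (fun g _ => hmaps g)]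
        apply Finset.sum_congr rfl
        intro μ _
        rw [Nat.card_eq_fintype_card, Fintype.card_subtype]
      rw [hcard]
      push_cast
      rw [← step_det n r l hl]
      apply Finset.sum_congr rfl
      intro μ hμ
      rw [Fintype.mem_piFinset] at hμ
      have hboxμ : ∀ i : Fin r, ex l ((i : ℕ) + 1) ≤ μ i ∧ μ i ≤ l i := by
        intro i
        have := hμ i
        rw [hA, Finset.mem_Icc] at this
        exact this
      have hμdec : ∀ i : ℕ, ex μ (i + 1) ≤ ex μ i := by
        intro i
        rcases lt_or_ge (i+1) r with h1 | h1
        · have hir : i < r := by omega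
          rw [show ex μ (i+1) = μ ⟨i+1, h1⟩ from by simp [ex, h1],
            show ex μ i = μ ⟨i, hir⟩ from by simp [ex, hir]]
          have h2 := (hboxμ ⟨i+1, h1⟩).2
          have h3 := (hboxμ ⟨i, hir⟩).1
          have h4 : ex l ((⟨i, hir⟩ : Fin r) : ℕ) = l ⟨i, hir⟩ := ex_coe l _
          have h5 : ex l (i+1) = l ⟨i+1, h1⟩ := by simp [ex, h1]
          calc μ ⟨i+1, h1⟩ ≤ l ⟨i+1, h1⟩ := h2
            _ = ex l (i+1) := h5.symm
            _ ≤ μ ⟨i, hir⟩ := h3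
        · rw [ex_ge μ h1]
          exact Nat.zero_le _
      rw [Nat.card_congr (fiberEquiv n r l hl μ hboxμ)]
      exact ih μ hμdec


lemma card_filter_lt_of_anti {b : ℕ} (q : Fin b → ℕ)
    (hq : ∀ j j' : Fin b, j ≤ j' → q j' ≤ q j) (v : ℕ) (j : Fin b) :
    (j : ℕ) < (Finset.univ.filter fun j' => v ≤ q j').card ↔ v ≤ q j := by
  classical
  constructor
  · intro h
    by_contra hc
    push_neg at hc
    have hsub : (Finset.univ.filter fun j' => v ≤ q j') ⊆
        Finset.univ.filter (fun j' : Fin b => (j' : ℕ) < (j : ℕ)) := by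
      intro j' hj'
      rw [Finset.mem_filter] at hj' ⊢
      refine ⟨Finset.mem_univ _, ?_⟩
      by_contra hge
      push_neg at hge
      have hle : j ≤ j' := by rw [Fin.le_def]; omega
      have := le_trans hj'.2 (hq j j' hle)
      omega
    have hcard := Finset.card_le_card hsub
    have hmaps : ∀ x ∈ Finset.univ.filter (fun j' : Fin b => (j' : ℕ) < (j : ℕ)),
        (x : ℕ) ∈ Finset.range (j : ℕ) := by
      intro x hx
      rw [Finset.mem_filter] at hx
      rw [Finset.mem_range]
      exact hx.2
    have hinj : ∀ x ∈ Finset.univ.filter (fun j' : Fin b => (j' : ℕ) < (j : ℕ)),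
        ∀ y ∈ Finset.univ.filter (fun j' : Fin b => (j' : ℕ) < (j : ℕ)),
        (x : ℕ) = (y : ℕ) → x = y := fun x _ y _ hxy => Fin.ext hxy
    have hle := Finset.card_le_card_of_injOn _ hmaps hinj
    rw [Finset.card_range] at hle
    omega
  · intro h
    have hsub : Finset.univ.filter (fun j' : Fin b => (j' : ℕ) ≤ (j : ℕ)) ⊆
        Finset.univ.filter fun j' => v ≤ q j' := by
      intro j' hj'
      rw [Finset.mem_filter] at hj' ⊢
      refine ⟨Finset.mem_univ _, ?_⟩
      exact le_trans h (hq j' j (by rw [Fin.le_def]; omega))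
    have hmaps : ∀ x ∈ Finset.range ((j : ℕ) + 1),
        (⟨min x (j : ℕ), lt_of_le_of_lt (min_le_right _ _) j.isLt⟩ : Fin b)
          ∈ Finset.univ.filter (fun j' : Fin b => (j' : ℕ) ≤ (j : ℕ)) := by
      intro x hx
      rw [Finset.mem_filter]
      refine ⟨Finset.mem_univ _, ?_⟩
      show min x (j : ℕ) ≤ (j : ℕ)
      exact min_le_right _ _
    have hinj : ∀ x ∈ Finset.range ((j : ℕ) + 1), ∀ y ∈ Finset.range ((j : ℕ) + 1),
        (⟨min x (j : ℕ), lt_of_le_of_lt (min_le_right _ _) j.isLt⟩ : Fin b)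
          = ⟨min y (j : ℕ), lt_of_le_of_lt (min_le_right _ _) j.isLt⟩ → x = y := by
      intro x hx y hy hxy
      rw [Finset.mem_range] at hx hy
      have := congrArg Fin.val hxy
      simp only at this
      omega
    have hge := Finset.card_le_card_of_injOn _ hmaps hinj
    rw [Finset.card_range] at hge
    have := Finset.card_le_card hsub
    omega

lemma card_filter_icc_of_anti (c : ℕ) (P : ℕ → Prop) [DecidablePred P]
    (hP : ∀ v v', v ≤ v' → P v' → P v) (v : ℕ) (hv1 : 1 ≤ v) (hv2 : v ≤ c) :
    v ≤ ((Finset.Icc 1 c).filter P).card ↔ P v := by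
  constructor
  · intro h
    by_contra hc
    have hsub : (Finset.Icc 1 c).filter P ⊆ Finset.Icc 1 (v - 1) := by
      intro w hw
      rw [Finset.mem_filter, Finset.mem_Icc] at hw
      rw [Finset.mem_Icc]
      refine ⟨hw.1.1, ?_⟩
      by_contra hge
      push_neg at hge
      exact hc (hP v w (by omega) hw.2)
    have := Finset.card_le_card hsub
    rw [Nat.card_Icc] at this
    omega
  · intro h
    have hsub : Finset.Icc 1 v ⊆ (Finset.Icc 1 c).filter P := by
      intro w hw
      rw [Finset.mem_Icc] at hw
      rw [Finset.mem_filter, Finset.mem_Icc]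
      exact ⟨⟨hw.1, le_trans hw.2 hv2⟩, hP w v hw.2 h⟩
    have := Finset.card_le_card hsub
    rw [Nat.card_Icc] at this
    omega

lemma card_filter_val_lt {b : ℕ} (K : ℕ) (hK : K ≤ b) :
    (Finset.univ.filter fun j : Fin b => (j : ℕ) < K).card = K := by
  rcases Nat.eq_zero_or_pos b with hb | hb
  · subst hb
    have hK0 : K = 0 := by omega
    subst hK0
    simp
  · have key : (Finset.univ.filter fun j : Fin b => (j : ℕ) < K).card
        = (Finset.range K).card := by
      apply Finset.card_nbij' (i := fun j : Fin b => (j : ℕ))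
        (j := fun t : ℕ => (⟨min t (b-1), by omega⟩ : Fin b))
      · intro j hj
        rw [Finset.mem_coe, Finset.mem_filter] at hj
        rw [Finset.mem_coe, Finset.mem_range]
        exact hj.2
      · intro t ht
        rw [Finset.mem_coe, Finset.mem_range] at ht
        rw [Finset.mem_coe, Finset.mem_filter]
        refine ⟨Finset.mem_univ _, ?_⟩
        show min t (b-1) < K
        omega
      · intro j hj
        rw [Finset.mem_coe, Finset.mem_filter] at hj
        have hj2 := hj.2
        have h3 := j.isLt
        apply Fin.ext
        show min (j : ℕ) (b-1) = (j : ℕ)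
        omega
      · intro t ht
        rw [Finset.mem_coe, Finset.mem_range] at ht
        show min t (b-1) = t
        omega
    rw [key, Finset.card_range]
lemma pat_ge_bottom {n r : ℕ} {l : Fin r → ℕ} (g : Pat n r l) (m : ℕ) (hm : m ≤ n)
    (i : Fin r) : ex l ((i : ℕ) + (n - m)) ≤ g.1 m i := by
  have h1 := pat_diag g (n - m) m (i : ℕ)
  rw [show m + (n - m) = n by omega, g.2.2.1 n (le_refl n), ex_coe] at h1
  exact h1

section Main
variable (a b c : ℕ)

def lshape : Fin (a + c) → ℕ := fun i => if (i : ℕ) < a then b else 0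

lemma lshape_dec : ∀ i : ℕ, ex (lshape a b c) (i + 1) ≤ ex (lshape a b c) i := by
  intro i
  rcases lt_or_ge (i+1) (a+c) with h1 | h1
  · have h2 : i < a + c := by omega
    rw [show ex (lshape a b c) (i+1) = lshape a b c ⟨i+1, h1⟩ from by simp [ex, h1],
      show ex (lshape a b c) i = lshape a b c ⟨i, h2⟩ from by simp [ex, h2]]
    unfold lshape
    simp only
    split <;> split <;> omega
  · rw [ex_ge _ h1]
    exact Nat.zero_le _

def toG (π : Fin a → Fin b → ℕ) : ℕ → Fin (a + c) → ℕ := fun m i =>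
  if h : (i : ℕ) < a then
    (Finset.univ.filter fun j : Fin b => c + (i : ℕ) + 1 ≤ m + π ⟨(i : ℕ), h⟩ j).card
  else 0

def toP (g : ℕ → Fin (a + c) → ℕ) : Fin a → Fin b → ℕ := fun i j =>
  ((Finset.Icc 1 c).filter fun v => (j : ℕ) <
    g (c + (i : ℕ) + 1 - v) ⟨(i : ℕ), lt_of_lt_of_le i.isLt (Nat.le_add_right a c)⟩).card

/-- the plane partition subtype -/
def PPcond (π : Fin a → Fin b → ℕ) : Prop :=
  (∀ i j, π i j ≤ c) ∧
  (∀ (i i' : Fin a) (j : Fin b), i ≤ i' → π i' j ≤ π i j) ∧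
  (∀ (i : Fin a) (j j' : Fin b), j ≤ j' → π i j' ≤ π i j)

lemma toP_le (g : ℕ → Fin (a + c) → ℕ) (i : Fin a) (j : Fin b) : toP a b c g i j ≤ c := by
  unfold toP
  calc ((Finset.Icc 1 c).filter _).card ≤ (Finset.Icc 1 c).card :=
        Finset.card_le_card (Finset.filter_subset _ _)
    _ = c := by rw [Nat.card_Icc]; omega

def ppEquiv : {π : Fin a → Fin b → ℕ // PPcond a b c π} ≃ Pat (a + c) (a + c) (lshape a b c) where
  toFun π := ⟨toG a b c π.1, by
    obtain ⟨hπc, hπi, hπj⟩ := π.2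
    refine ⟨?_, ?_, ?_, ?_⟩
    · intro i
      unfold toG
      split
      · rename_i h
        rw [Finset.card_eq_zero, Finset.filter_eq_empty_iff]
        intro j _
        have := hπc ⟨(i : ℕ), h⟩ j
        omega
      · rfl
    · intro m hm
      funext i
      unfold toG lshape
      split
      · rename_i h
        have : (Finset.univ.filter fun j : Fin b => c + (i : ℕ) + 1 ≤ m + π.1 ⟨(i : ℕ), h⟩ j)
            = Finset.univ := by
          rw [Finset.filter_eq_self]
          intro j _
          omega
        rw [this, Finset.card_univ, Fintype.card_fin]
      · rfl
    · intro m i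
      unfold toG
      split
      · apply Finset.card_le_card
        intro j hj
        simp only [Finset.mem_filter] at hj ⊢
        refine ⟨Finset.mem_univ _, ?_⟩
        omega
      · exact le_refl _
    · intro m i
      rcases lt_or_ge (i+1) (a+c) with h1 | h1
      swap
      · rw [ex_ge _ h1]
        exact Nat.zero_le _
      have h2 : i < a + c := by omega
      rw [show ex (toG a b c π.1 (m+1)) (i+1) = toG a b c π.1 (m+1) ⟨i+1, h1⟩ from by
          simp [ex, h1],
        show ex (toG a b c π.1 m) i = toG a b c π.1 m ⟨i, h2⟩ from by simp [ex, h2]]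
      unfold toG
      rcases lt_or_ge (i+1) a with h3 | h3
      · have h4 : ((⟨i, h2⟩ : Fin (a+c)) : ℕ) < a := by show i < a; omega
        rw [dif_pos (show ((⟨i+1, h1⟩ : Fin (a+c)) : ℕ) < a from h3), dif_pos h4]
        apply Finset.card_le_card
        intro j hj
        rw [Finset.mem_filter] at hj ⊢
        refine ⟨Finset.mem_univ _, ?_⟩
        have hj2 := hj.2
        have hcol : π.1 ⟨i+1, h3⟩ j ≤ π.1 ⟨i, by omega⟩ j := by
          apply hπi
          rw [Fin.le_def]
          simp
        simp only at hj2 ⊢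
        omega
      · rw [dif_neg (show ¬ ((⟨i+1, h1⟩ : Fin (a+c)) : ℕ) < a from by show ¬ (i+1) < a; omega)]
        exact Nat.zero_le _⟩
  invFun g := ⟨toP a b c g.1, by
    refine ⟨fun i j => toP_le a b c g.1 i j, ?_, ?_⟩
    · intro i i' j hii
      unfold toP
      apply Finset.card_le_card
      intro v hv
      rw [Finset.mem_filter] at hv ⊢
      refine ⟨hv.1, ?_⟩
      have hvmem := Finset.mem_Icc.1 hv.1
      have hv2 := hv.2
      have hs : (i' : ℕ) = (i : ℕ) + ((i' : ℕ) - (i : ℕ)) := by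
        have : (i : ℕ) ≤ (i' : ℕ) := hii
        omega
      set s := (i' : ℕ) - (i : ℕ) with hsdef
      have harith : c + (i' : ℕ) + 1 - v = (c + (i : ℕ) + 1 - v) + s := by omega
      have hdiag := pat_diag g s (c + (i : ℕ) + 1 - v) (i : ℕ)
      rw [show (i : ℕ) + s = (i' : ℕ) by omega] at hdiag
      rw [← harith] at hdiag
      have e1 : ex (g.1 (c + (i' : ℕ) + 1 - v)) (i' : ℕ)
          = g.1 (c + (i' : ℕ) + 1 - v) ⟨(i' : ℕ), lt_of_lt_of_le i'.isLt (Nat.le_add_right a c)⟩ := by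
        simp [ex, lt_of_lt_of_le i'.isLt (Nat.le_add_right a c)]
      have e2 : ex (g.1 (c + (i : ℕ) + 1 - v)) (i : ℕ)
          = g.1 (c + (i : ℕ) + 1 - v) ⟨(i : ℕ), lt_of_lt_of_le i.isLt (Nat.le_add_right a c)⟩ := by
        simp [ex, lt_of_lt_of_le i.isLt (Nat.le_add_right a c)]
      rw [e1, e2] at hdiag
      omega
    · intro i j j' hjj
      unfold toP
      apply Finset.card_le_card
      intro v hv
      rw [Finset.mem_filter] at hv ⊢
      refine ⟨hv.1, ?_⟩
      have : (j : ℕ) ≤ (j' : ℕ) := hjj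
      have hv2 := hv.2
      omega⟩
  left_inv := by
    intro π
    apply Subtype.ext
    funext i j
    show toP a b c (toG a b c π.1) i j = π.1 i j
    obtain ⟨hπc, hπi, hπj⟩ := π.2
    unfold toP
    have hstep : ∀ v, v ∈ Finset.Icc 1 c →
        (((j : ℕ) < toG a b c π.1 (c + (i : ℕ) + 1 - v)
          ⟨(i : ℕ), lt_of_lt_of_le i.isLt (Nat.le_add_right a c)⟩) ↔ v ≤ π.1 i j) := by
      intro v hv
      rw [Finset.mem_Icc] at hv
      unfold toG
      rw [dif_pos (show (((⟨(i : ℕ), lt_of_lt_of_le i.isLt (Nat.le_add_right a c)⟩ : Fin (a+c))) : ℕ) < a from i.isLt)]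
      have hfe : (Finset.univ.filter fun j' : Fin b =>
          c + (i : ℕ) + 1 ≤ (c + (i : ℕ) + 1 - v) + π.1 ⟨(i : ℕ), i.isLt⟩ j')
          = Finset.univ.filter fun j' : Fin b => v ≤ π.1 i j' := by
        apply Finset.filter_congr
        intro j' _
        rw [Fin.eta]
        constructor <;> intro <;> omega
      rw [hfe]
      exact card_filter_lt_of_anti (π.1 i) (fun x y hxy => hπj i x y hxy) v j
    rw [Finset.filter_congr hstep]
    have : (Finset.Icc 1 c).filter (fun v => v ≤ π.1 i j) = Finset.Icc 1 (π.1 i j) := by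
      ext v
      rw [Finset.mem_filter, Finset.mem_Icc, Finset.mem_Icc]
      have := hπc i j
      constructor <;> intro <;> omega
    rw [this, Nat.card_Icc]
    omega
  right_inv := by
    intro g
    apply Subtype.ext
    funext m i
    show toG a b c (toP a b c g.1) m i = g.1 m i
    unfold toG
    split
    swap
    · rename_i h
      -- i ≥ a : g m i = 0
      have h1 := pat_le_top g m i
      unfold lshape at h1
      rw [if_neg h] at h1
      omega
    rename_i h
    have hieq : (⟨(i : ℕ), h⟩ : Fin a) = ⟨(i : ℕ), h⟩ := rfl
    have hidx : (⟨(i : ℕ), lt_of_lt_of_le (show (i:ℕ) < a from h) (Nat.le_add_right a c)⟩ : Fin (a+c)) = i :=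
      Fin.eta i _
    have hgb : g.1 m i ≤ b := by
      have h1 := pat_le_top g m i
      unfold lshape at h1
      rwa [if_pos h] at h1
    rcases le_or_gt m (i : ℕ) with hm1 | hm1
    · -- g m i = 0, filter empty
      rw [pat_zero_of_le g m i hm1]
      rw [Finset.card_eq_zero, Finset.filter_eq_empty_iff]
      intro j _
      have := toP_le a b c g.1 ⟨(i : ℕ), h⟩ j
      omega
    rcases le_or_gt m (c + (i : ℕ)) with hm2 | hm2
    · -- main case
      set v := c + (i : ℕ) + 1 - m with hvdef
      have hv1 : 1 ≤ v := by omega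
      have hv2 : v ≤ c := by omega
      have hveq : c + (i : ℕ) + 1 - v = m := by omega
      have hcond : ∀ j : Fin b,
          (c + (i : ℕ) + 1 ≤ m + toP a b c g.1 ⟨(i : ℕ), h⟩ j) ↔ ((j : ℕ) < g.1 m i) := by
        intro j
        have : (c + (i : ℕ) + 1 ≤ m + toP a b c g.1 ⟨(i : ℕ), h⟩ j) ↔
            (v ≤ toP a b c g.1 ⟨(i : ℕ), h⟩ j) := by
          constructor <;> intro <;> omega
        rw [this]
        unfold toP
        have hanti : ∀ v' v'', v' ≤ v'' →
            ((j : ℕ) < g.1 (c + (i : ℕ) + 1 - v'')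
              ⟨(i : ℕ), lt_of_lt_of_le (⟨(i : ℕ), h⟩ : Fin a).isLt (Nat.le_add_right a c)⟩) →
            ((j : ℕ) < g.1 (c + (i : ℕ) + 1 - v')
              ⟨(i : ℕ), lt_of_lt_of_le (⟨(i : ℕ), h⟩ : Fin a).isLt (Nat.le_add_right a c)⟩) := by
          intro v' v'' hvv hlt
          have := pat_mono g (show c + (i : ℕ) + 1 - v'' ≤ c + (i : ℕ) + 1 - v' by omega)
            (⟨(i : ℕ), lt_of_lt_of_le (⟨(i : ℕ), h⟩ : Fin a).isLt (Nat.le_add_right a c)⟩ : Fin (a+c))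
          omega
        rw [card_filter_icc_of_anti c _ hanti v hv1 hv2]
        rw [hveq]
      rw [Finset.filter_congr (fun j _ => hcond j)]
      exact card_filter_val_lt (g.1 m i) hgb
    · -- m large : g m i = b, filter = univ
      have hgeb : b ≤ g.1 m i := by
        rcases le_or_gt m (a + c) with hm3 | hm3
        · have h1 := pat_ge_bottom g m hm3 i
          have h4 : (i : ℕ) + (a + c - m) < a := by omega
          rw [show ex (lshape a b c) ((i : ℕ) + (a + c - m))
              = lshape a b c ⟨(i : ℕ) + (a + c - m), by omega⟩ from by
                unfold ex
                rw [dif_pos (show (i : ℕ) + (a + c - m) < a + c by omega)]] at h1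
          unfold lshape at h1
          rw [if_pos h4] at h1
          omega
        · rw [g.2.2.1 m (by omega)]
          unfold lshape
          rw [if_pos h]
      have hgi : g.1 m i = b := le_antisymm hgb hgeb
      rw [hgi]
      have : (Finset.univ.filter fun j : Fin b =>
          c + (i : ℕ) + 1 ≤ m + toP a b c g.1 ⟨(i : ℕ), h⟩ j) = Finset.univ := by
        rw [Finset.filter_eq_self]
        intro j _
        omega
      rw [this, Finset.card_univ, Fintype.card_fin]
end Main
lemma tele (b : ℕ) (i k : ℕ) (hi : 1 ≤ i) (hk : 1 ≤ k) :
    ∏ j ∈ Finset.Icc 1 b, (((i : ℚ) + j + k - 1) / ((i : ℚ) + j + k - 2))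
      = ((i : ℚ) + b + k - 1) / ((i : ℚ) + k - 1) := by
  have hik : (1 : ℚ) ≤ (i : ℚ) + (k : ℚ) - 1 := by
    have h1 : (1:ℚ) ≤ (i:ℚ) := by exact_mod_cast hi
    have h2 : (1:ℚ) ≤ (k:ℚ) := by exact_mod_cast hk
    linarith
  induction b with
  | zero =>
      simp only [show Finset.Icc 1 0 = (∅ : Finset ℕ) from rfl, Finset.prod_empty]
      rw [eq_div_iff (by push_cast; linarith)]
      push_cast
      ring
  | succ m ih =>
      rw [Finset.prod_Icc_succ_top (by omega), ih]
      have hne1 : (i : ℚ) + (m : ℚ) + (k : ℚ) - 1 ≠ 0 := by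
        have : (0:ℚ) ≤ (m:ℚ) := by positivity
        intro hcc; linarith
      have hne2 : (i : ℚ) + (k : ℚ) - 1 ≠ 0 := by intro hcc; linarith
      have e : ((i:ℚ) + (((m+1) : ℕ):ℚ) + (k:ℚ) - 2) = (i:ℚ) + (m:ℚ) + (k:ℚ) - 1 := by
        push_cast; ring
      rw [e, div_mul_div_comm,
        div_eq_div_iff (mul_ne_zero hne2 hne1) hne2]
      push_cast
      ring

lemma prod_fin_lt {n a : ℕ} (ha : a ≤ n) (f : ℕ → ℚ) :
    ∏ i ∈ Finset.univ.filter (fun i : Fin n => (i : ℕ) < a), f (i : ℕ)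
      = ∏ x ∈ Finset.range a, f x := by
  rcases Nat.eq_zero_or_pos n with hn | hn
  · subst hn
    have ha0 : a = 0 := by omega
    subst ha0
    simp
  apply Finset.prod_nbij' (i := fun i : Fin n => (i : ℕ))
    (j := fun x : ℕ => (⟨min x (n - 1), by omega⟩ : Fin n))
  · intro i hi
    rw [Finset.mem_filter] at hi
    rw [Finset.mem_range]
    exact hi.2
  · intro x hx
    rw [Finset.mem_range] at hx
    rw [Finset.mem_filter]
    refine ⟨Finset.mem_univ _, ?_⟩
    show min x (n-1) < a
    omega
  · intro i hi
    rw [Finset.mem_filter] at hi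
    have := hi.2
    have := i.isLt
    apply Fin.ext
    show min (i : ℕ) (n-1) = (i : ℕ)
    omega
  · intro x hx
    rw [Finset.mem_range] at hx
    show min x (n-1) = x
    omega
  · intro i _
    rfl

lemma prod_fin_ge {n a : ℕ} (ha : a ≤ n) (f : ℕ → ℚ) :
    ∏ j ∈ Finset.univ.filter (fun j : Fin n => a ≤ (j : ℕ)), f (j : ℕ)
      = ∏ k ∈ Finset.range (n - a), f (a + k) := by
  rcases Nat.eq_zero_or_pos n with hn | hn
  · subst hn
    have ha0 : a = 0 := by omega
    simp [ha0]
  apply Finset.prod_nbij' (i := fun j : Fin n => (j : ℕ) - a)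
    (j := fun k : ℕ => (⟨min (a + k) (n - 1), by omega⟩ : Fin n))
  · intro j hj
    rw [Finset.mem_filter] at hj
    rw [Finset.mem_range]
    have := j.isLt
    have := hj.2
    omega
  · intro k hk
    rw [Finset.mem_range] at hk
    rw [Finset.mem_filter]
    refine ⟨Finset.mem_univ _, ?_⟩
    show a ≤ min (a + k) (n-1)
    omega
  · intro j hj
    rw [Finset.mem_filter] at hj
    have := hj.2
    have := j.isLt
    apply Fin.ext
    show min (a + ((j : ℕ) - a)) (n-1) = (j : ℕ)
    omega
  · intro k hk
    rw [Finset.mem_range] at hk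
    show min (a + k) (n-1) - a = k
    omega
  · intro j hj
    rw [Finset.mem_filter] at hj
    have h2 := hj.2
    congr 1
    omega

lemma final_prod (a b c : ℕ) :
    (∏ i : Fin (a + c), ∏ j ∈ Finset.Ioi i,
      ((((lshape a b c i : ℚ) - i) - ((lshape a b c j : ℚ) - j)) / ((j : ℚ) - i)))
    = ∏ i ∈ Finset.Icc 1 a, ∏ j ∈ Finset.Icc 1 b, ∏ k ∈ Finset.Icc 1 c,
        (((i : ℚ) + j + k - 1) / ((i : ℚ) + j + k - 2)) := by
  -- simplify RHS by telescoping middle product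
  have hrhs : ∀ i ∈ Finset.Icc 1 a, ∀ k ∈ Finset.Icc 1 c,
      (∏ j ∈ Finset.Icc 1 b, (((i : ℚ) + j + k - 1) / ((i : ℚ) + j + k - 2)))
        = ((i : ℚ) + b + k - 1) / ((i : ℚ) + k - 1) := by
    intro i hi k hk
    rw [Finset.mem_Icc] at hi hk
    exact tele b i k hi.1 hk.1
  have hswap : (∏ i ∈ Finset.Icc 1 a, ∏ j ∈ Finset.Icc 1 b, ∏ k ∈ Finset.Icc 1 c,
        (((i : ℚ) + j + k - 1) / ((i : ℚ) + j + k - 2)))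
      = ∏ i ∈ Finset.Icc 1 a, ∏ k ∈ Finset.Icc 1 c,
          ((i : ℚ) + b + k - 1) / ((i : ℚ) + k - 1) := by
    apply Finset.prod_congr rfl
    intro i hi
    rw [Finset.prod_comm]
    apply Finset.prod_congr rfl
    intro k hk
    exact hrhs i hi k hk
  rw [hswap]
  -- LHS analysis
  have hlhs1 : ∀ i : Fin (a + c), (¬ (i : ℕ) < a) → (∏ j ∈ Finset.Ioi i,
      ((((lshape a b c i : ℚ) - i) - ((lshape a b c j : ℚ) - j)) / ((j : ℚ) - i))) = 1 := by
    intro i hi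
    apply Finset.prod_eq_one
    intro j hj
    rw [Finset.mem_Ioi] at hj
    have hij : (i : ℕ) < (j : ℕ) := hj
    have hja : ¬ (j : ℕ) < a := by omega
    unfold lshape
    rw [if_neg hi, if_neg hja]
    rw [div_eq_one_iff_eq (by
      intro hcc
      have : (i : ℚ) = (j : ℚ) := by linarith
      have : (i : ℕ) = (j : ℕ) := by exact_mod_cast this
      omega)]
    push_cast
    ring
  have hlhs2 : ∀ i : Fin (a + c), ((i : ℕ) < a) → (∏ j ∈ Finset.Ioi i,
      ((((lshape a b c i : ℚ) - i) - ((lshape a b c j : ℚ) - j)) / ((j : ℚ) - i)))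
      = ∏ j ∈ Finset.univ.filter (fun j : Fin (a+c) => a ≤ (j : ℕ)),
          (((b : ℚ) + j - i) / ((j : ℚ) - i)) := by
    intro i hi
    have hstep1 : (∏ j ∈ Finset.Ioi i,
        ((((lshape a b c i : ℚ) - i) - ((lshape a b c j : ℚ) - j)) / ((j : ℚ) - i)))
        = ∏ j ∈ (Finset.Ioi i).filter (fun j : Fin (a+c) => a ≤ (j : ℕ)),
          ((((lshape a b c i : ℚ) - i) - ((lshape a b c j : ℚ) - j)) / ((j : ℚ) - i)) := by
      symm
      apply Finset.prod_filter_of_ne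
      intro j hj hne
      rw [Finset.mem_Ioi] at hj
      by_contra hja
      push_neg at hja
      apply hne
      unfold lshape
      rw [if_pos hi, if_pos hja]
      have hij : (i : ℕ) < (j : ℕ) := hj
      rw [div_eq_one_iff_eq (by
        intro hcc
        have : (i : ℚ) = (j : ℚ) := by linarith
        have : (i : ℕ) = (j : ℕ) := by exact_mod_cast this
        omega)]
      ring
    have hstep2 : (Finset.Ioi i).filter (fun j : Fin (a+c) => a ≤ (j : ℕ))
        = Finset.univ.filter (fun j : Fin (a+c) => a ≤ (j : ℕ)) := by
      ext j
      rw [Finset.mem_filter, Finset.mem_filter, Finset.mem_Ioi]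
      constructor
      · rintro ⟨h1, h2⟩
        exact ⟨Finset.mem_univ _, h2⟩
      · rintro ⟨_, h2⟩
        refine ⟨?_, h2⟩
        show i < j
        rw [Fin.lt_def]
        omega
    rw [hstep1, hstep2]
    apply Finset.prod_congr rfl
    intro j hj
    rw [Finset.mem_filter] at hj
    have hja := hj.2
    unfold lshape
    rw [if_pos hi, if_neg (by omega)]
    congr 1
    push_cast
    ring
  have hmain : (∏ i : Fin (a + c), ∏ j ∈ Finset.Ioi i,
      ((((lshape a b c i : ℚ) - i) - ((lshape a b c j : ℚ) - j)) / ((j : ℚ) - i)))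
      = ∏ i ∈ Finset.univ.filter (fun i : Fin (a+c) => (i : ℕ) < a),
          ∏ j ∈ Finset.univ.filter (fun j : Fin (a+c) => a ≤ (j : ℕ)),
            (((b : ℚ) + j - i) / ((j : ℚ) - i)) := by
    rw [Finset.prod_filter]
    apply Finset.prod_congr rfl
    intro i _
    by_cases hi : (i : ℕ) < a
    · rw [if_pos hi]
      exact hlhs2 i hi
    · rw [if_neg hi]
      exact hlhs1 i hi
  rw [hmain]
  -- reindex
  have hre1 : (∏ i ∈ Finset.univ.filter (fun i : Fin (a+c) => (i : ℕ) < a),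
      ∏ j ∈ Finset.univ.filter (fun j : Fin (a+c) => a ≤ (j : ℕ)),
        (((b : ℚ) + j - i) / ((j : ℚ) - i)))
      = ∏ x ∈ Finset.range a, ∏ k ∈ Finset.range c,
          (((b : ℚ) + ((a + k : ℕ) : ℚ) - x) / (((a + k : ℕ) : ℚ) - x)) := by
    rw [← prod_fin_lt (show a ≤ a + c by omega)
      (fun x => ∏ k ∈ Finset.range c, (((b : ℚ) + ((a + k : ℕ) : ℚ) - x) / (((a + k : ℕ) : ℚ) - x)))]
    apply Finset.prod_congr rfl
    intro i _
    have := prod_fin_ge (n := a + c) (show a ≤ a + c by omega)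
      (fun y => ((b : ℚ) + (y : ℚ) - ((i : ℕ) : ℚ)) / ((y : ℚ) - ((i : ℕ) : ℚ)))
    rw [show a + c - a = c by omega] at this
    exact this
  rw [hre1]
  -- now match with RHS by reflection/shift
  symm
  apply Finset.prod_nbij' (i := fun i : ℕ => a - i) (j := fun x : ℕ => a - x)
  · intro i hi
    rw [Finset.mem_Icc] at hi
    rw [Finset.mem_range]
    omega
  · intro x hx
    rw [Finset.mem_range] at hx
    rw [Finset.mem_Icc]
    omega
  · intro i hi
    rw [Finset.mem_Icc] at hi
    omega
  · intro x hx
    rw [Finset.mem_range] at hx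
    omega
  · intro i hi
    rw [Finset.mem_Icc] at hi
    apply Finset.prod_nbij' (i := fun k : ℕ => k - 1) (j := fun k : ℕ => k + 1)
    · intro k hk
      rw [Finset.mem_Icc] at hk
      rw [Finset.mem_range]
      omega
    · intro k hk
      rw [Finset.mem_range] at hk
      rw [Finset.mem_Icc]
      omega
    · intro k hk
      rw [Finset.mem_Icc] at hk
      omega
    · intro k hk
      rw [Finset.mem_range] at hk
      omega
    · intro k hk
      rw [Finset.mem_Icc] at hk
      have h1 : ((a - i : ℕ) : ℚ) = (a : ℚ) - (i : ℚ) := by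
        have : (i : ℕ) ≤ a := hi.2
        push_cast [this]
        ring
      have h2 : ((a + (k - 1) : ℕ) : ℚ) = (a : ℚ) + (k : ℚ) - 1 := by
        have : 1 ≤ k := hk.1
        push_cast [this]
        ring
      rw [h1, h2]
      congr 1 <;> ring

end MacMahon

/-- **MacMahon's boxed plane partition formula**: the number of plane partitions in the
`a × b × c` box — functions `π : {1,…,a} × {1,…,b} → {0,…,c}` weakly decreasing in each
coordinate — equals `∏_{i=1}^a ∏_{j=1}^b ∏_{k=1}^c (i+j+k-1)/(i+j+k-2)`. -/
theorem macmahon_boxed_plane_partitions (a b c : ℕ) :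
    (Nat.card {π : Fin a → Fin b → ℕ //
        (∀ i j, π i j ≤ c) ∧
        (∀ (i i' : Fin a) (j : Fin b), i ≤ i' → π i' j ≤ π i j) ∧
        (∀ (i : Fin a) (j j' : Fin b), j ≤ j' → π i j' ≤ π i j)} : ℚ)
      = ∏ i ∈ Finset.Icc 1 a, ∏ j ∈ Finset.Icc 1 b, ∏ k ∈ Finset.Icc 1 c,
          (((i : ℚ) + j + k - 1) / ((i : ℚ) + j + k - 2)) := by
  have e1 : Nat.card {π : Fin a → Fin b → ℕ //
        (∀ i j, π i j ≤ c) ∧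
        (∀ (i i' : Fin a) (j : Fin b), i ≤ i' → π i' j ≤ π i j) ∧
        (∀ (i : Fin a) (j j' : Fin b), j ≤ j' → π i j' ≤ π i j)}
      = Nat.card (MacMahon.Pat (a + c) (a + c) (MacMahon.lshape a b c)) :=
    Nat.card_congr (MacMahon.ppEquiv a b c)
  rw [e1, MacMahon.pat_card (a + c) (a + c) (MacMahon.lshape a b c) (MacMahon.lshape_dec a b c),
    MacMahon.det_MM (a + c) (MacMahon.lshape a b c)]
  exact MacMahon.final_prod a b c
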